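/- There exists a set A ∈ fE(n ↦ n²) such that for every polynomial p with real coefficients satisfying p(n) ≥ 1 for all n ∈ ℕ, A ∉ fN(n ↦ p(n)); in particular, fE(n ↦ n²) ⊄ fN(p) for any such polynomial p. -/

import Mathlib

open Filter Set

/-- The basic clopen set `[σ]` in the Baire space determined by a finite sequence `σ`. -/
def cylinder (σ : List ℕ) : Set (ℕ → ℕ) :=
  {x | ∀ i : Fin σ.length, x i = σ.get i}

/-- `limsup_n h(n) = ∞`, i.e. `h` takes arbitrarily large values frequently. -/
def LimsupInfty (h : ℕ → ℕ) : Prop :=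
  ∀ m : ℕ, ∃ᶠ n in Filter.atTop, m ≤ h n

/-- The family `fN(h)` of fake null sets: `F ∈ fN(h)` iff for every `ε > 0` there is a
sequence of finite sequences `σ_n` with `∑ 1/h(|σ_n|) < ε` covering `F`. -/
def fN (h : ℕ → ℕ) (F : Set (ℕ → ℕ)) : Prop :=
  ∀ ε : ℝ, 0 < ε →
    ∃ σ : ℕ → List ℕ,
      Summable (fun n => (1 : ℝ) / (h (σ n).length : ℝ)) ∧
      (∑' n, (1 : ℝ) / (h (σ n).length : ℝ)) < ε ∧
      F ⊆ ⋃ n, cylinder (σ n)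

/-- The restriction of `x` to the interval `[l, u)`, extended by `0` elsewhere. -/
def restrIco (x : ℕ → ℕ) (l u : ℕ) : ℕ → ℕ :=
  fun i => if l ≤ i ∧ i < u then x i else 0

/-- `J` is a set of patterns on the interval `[l, u)`: every element vanishes off `[l, u)`. -/
def SuppIco (l u : ℕ) (J : Set (ℕ → ℕ)) : Prop :=
  ∀ σ ∈ J, ∀ i, ¬ (l ≤ i ∧ i < u) → σ i = 0

/-- The family `fE(h)`: partition `ℕ` into consecutive nonempty intervals `I_n = [a n, a (n+1))`
(`a 0 = 0`, `a` strictly increasing), patterns `J_n ⊆ ω^{I_n}` with `∑ |J_n|/h(|I_n|) < ∞`,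
and `F ⊆ {x : x↾I_n ∈ J_n for all but finitely many n}`. -/
def fE (h : ℕ → ℕ) (F : Set (ℕ → ℕ)) : Prop :=
  ∃ a : ℕ → ℕ, a 0 = 0 ∧ StrictMono a ∧
    ∃ J : ℕ → Set (ℕ → ℕ),
      (∀ n, SuppIco (a n) (a (n+1)) (J n)) ∧
      (∀ n, (J n).Finite) ∧
      Summable (fun n => ((J n).ncard : ℝ) / (h (a (n+1) - a n) : ℝ)) ∧
      F ⊆ {x | ∀ᶠ n in Filter.atTop, restrIco x (a n) (a (n+1)) ∈ J n}

/-- The family `fS(h)` of fake small sets: as `fE(h)` but with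
`x↾I_n ∈ J_n` for infinitely many `n`. -/
def fS (h : ℕ → ℕ) (F : Set (ℕ → ℕ)) : Prop :=
  ∃ a : ℕ → ℕ, a 0 = 0 ∧ StrictMono a ∧
    ∃ J : ℕ → Set (ℕ → ℕ),
      (∀ n, SuppIco (a n) (a (n+1)) (J n)) ∧
      (∀ n, (J n).Finite) ∧
      Summable (fun n => ((J n).ncard : ℝ) / (h (a (n+1) - a n) : ℝ)) ∧
      F ⊆ {x | ∃ᶠ n in Filter.atTop, restrIco x (a n) (a (n+1)) ∈ J n}

/-- The family `fE(Fin)`: as `fE(h)` but one only requires each pattern set `J_n` to be finite. -/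
def fEFin (F : Set (ℕ → ℕ)) : Prop :=
  ∃ a : ℕ → ℕ, a 0 = 0 ∧ StrictMono a ∧
    ∃ J : ℕ → Set (ℕ → ℕ),
      (∀ n, SuppIco (a n) (a (n+1)) (J n)) ∧
      (∀ n, (J n).Finite) ∧
      F ⊆ {x | ∀ᶠ n in Filter.atTop, restrIco x (a n) (a (n+1)) ∈ J n}

/-- The family `fS(Fin)`: as `fS(h)` but one only requires each pattern set `J_n` to be finite. -/
def fSFin (F : Set (ℕ → ℕ)) : Prop :=
  ∃ a : ℕ → ℕ, a 0 = 0 ∧ StrictMono a ∧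
    ∃ J : ℕ → Set (ℕ → ℕ),
      (∀ n, SuppIco (a n) (a (n+1)) (J n)) ∧
      (∀ n, (J n).Finite) ∧
      F ⊆ {x | ∃ᶠ n in Filter.atTop, restrIco x (a n) (a (n+1)) ∈ J n}

/-- The family `fN(Fin)`: there are finite `S_n ⊆ ω^n` with
`F ⊆ {x : x↾n ∈ S_n for infinitely many n}`. -/
def fNFin (F : Set (ℕ → ℕ)) : Prop :=
  ∃ S : (n : ℕ) → Set (Fin n → ℕ),
    (∀ n, (S n).Finite) ∧
    F ⊆ {x | ∃ᶠ n in Filter.atTop, (fun i : Fin n => x i) ∈ S n}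

/-- The σ-ideal `M_-`: there are `x_F ∈ ω^ω` and a partition of `ℕ` into consecutive nonempty
intervals `I_n = [a n, a (n+1))` with `F ⊆ {x : x↾I_n ≠ x_F↾I_n for all but finitely many n}`. -/
def Mminus (F : Set (ℕ → ℕ)) : Prop :=
  ∃ xF : ℕ → ℕ, ∃ a : ℕ → ℕ, a 0 = 0 ∧ StrictMono a ∧
    F ⊆ {x | ∀ᶠ n in Filter.atTop, ∃ i, a n ≤ i ∧ i < a (n+1) ∧ x i ≠ xF i}

/-- The family `fN(h)` for a real-valued parameter `h`. -/
def fNR (h : ℕ → ℝ) (F : Set (ℕ → ℕ)) : Prop :=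
  ∀ ε : ℝ, 0 < ε →
    ∃ σ : ℕ → List ℕ,
      Summable (fun n => (1 : ℝ) / h (σ n).length) ∧
      (∑' n, (1 : ℝ) / h (σ n).length) < ε ∧
      F ⊆ ⋃ n, cylinder (σ n)

namespace Stmt11

def aSeq (n : ℕ) : ℕ := 2 ^ n - 1

def Gmem (i : ℕ) : Bool := decide (∃ n < i + 2, aSeq n ≤ i ∧ i < aSeq n + n)

def gcnt (m : ℕ) : ℕ := ((Finset.range m).filter (fun i => Gmem i = true)).card

def Phi (t : Finset ℕ) : ℕ → ℕ := fun i => if i ∈ t then 1 else 0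

def Aset : Set (ℕ → ℕ) := Set.univ.pi (fun i => if Gmem i then ({0, 1} : Set ℕ) else {0})

lemma aSeq_strictMono : StrictMono aSeq := by
  apply strictMono_nat_of_lt_succ
  intro n
  have h1 : 1 ≤ 2 ^ n := Nat.one_le_two_pow
  have h2 : 2 ^ (n + 1) = 2 * 2 ^ n := by ring
  unfold aSeq; omega

lemma mid_le (n : ℕ) : aSeq n + n ≤ aSeq (n + 1) := by
  have h1 : n < 2 ^ n := Nat.lt_two_pow_self
  have h2 : 2 ^ (n + 1) = 2 * 2 ^ n := by ring
  unfold aSeq; omega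

lemma Gmem_iff (i : ℕ) : Gmem i = true ↔ ∃ n, aSeq n ≤ i ∧ i < aSeq n + n := by
  unfold Gmem
  rw [decide_eq_true_iff]
  constructor
  · rintro ⟨n, _, h⟩; exact ⟨n, h⟩
  · rintro ⟨n, h1, h2⟩
    have h3 : n < 2 ^ n := Nat.lt_two_pow_self
    have h4 : aSeq n = 2 ^ n - 1 := rfl
    exact ⟨n, by omega, h1, h2⟩

lemma interval_uniq {n m i : ℕ} (h1 : aSeq n ≤ i) (h2 : i < aSeq (n + 1))
    (h3 : aSeq m ≤ i) (h4 : i < aSeq (m + 1)) : n = m := by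
  rcases lt_trichotomy n m with h | h | h
  · have := aSeq_strictMono.monotone (show n + 1 ≤ m by omega); omega
  · exact h
  · have := aSeq_strictMono.monotone (show m + 1 ≤ n by omega); omega

lemma aSeq_diff (n : ℕ) : aSeq (n + 1) - aSeq n = 2 ^ n := by
  have h1 : 1 ≤ 2 ^ n := Nat.one_le_two_pow
  have h2 : 2 ^ (n + 1) = 2 * 2 ^ n := by ring
  unfold aSeq; omega

lemma gcnt_mono {m m' : ℕ} (h : m ≤ m') : gcnt m ≤ gcnt m' :=
  Finset.card_le_card (Finset.filter_subset_filter _ (Finset.range_subset_range.2 h))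

lemma cylinder_open (σ : List ℕ) : IsOpen (cylinder σ) := by
  have h : cylinder σ = ⋂ i : Fin σ.length, (fun x : ℕ → ℕ => x i) ⁻¹' {σ.get i} := by
    ext x; simp [cylinder, Set.mem_iInter]
  rw [h]
  exact isOpen_iInter_of_finite fun i =>
    (isOpen_discrete _).preimage (continuous_apply (i : ℕ))

lemma Aset_compact : IsCompact Aset := by
  apply isCompact_univ_pi
  intro i
  by_cases h : Gmem i <;> simp only [h, if_true, if_false, Bool.false_eq_true] <;>
    exact (Set.toFinite _).isCompact

lemma Aset_cases {x : ℕ → ℕ} (hx : x ∈ Aset) (i : ℕ) (h : Gmem i = true) :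
    x i = 0 ∨ x i = 1 := by
  have := hx i (Set.mem_univ i)
  simp [h] at this
  tauto

lemma Aset_zero {x : ℕ → ℕ} (hx : x ∈ Aset) (i : ℕ) (h : ¬ Gmem i = true) :
    x i = 0 := by
  have := hx i (Set.mem_univ i)
  simp [h] at this
  exact this

lemma tri (N : ℕ) : ∑ n ∈ Finset.range N, n ≤ gcnt (aSeq N) := by
  induction N with
  | zero => simp
  | succ N ih =>
    rw [Finset.sum_range_succ]
    have hsub : (Finset.range (aSeq N)).filter (fun i => Gmem i = true) ∪
        Finset.Ico (aSeq N) (aSeq N + N) ⊆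
        (Finset.range (aSeq (N + 1))).filter (fun i => Gmem i = true) := by
      intro i hi
      rcases Finset.mem_union.1 hi with hi | hi
      · rw [Finset.mem_filter, Finset.mem_range] at hi ⊢
        exact ⟨lt_trans hi.1 (aSeq_strictMono (Nat.lt_succ_self N)), hi.2⟩
      · rw [Finset.mem_Ico] at hi
        rw [Finset.mem_filter, Finset.mem_range]
        have := mid_le N
        exact ⟨by omega, (Gmem_iff i).2 ⟨N, hi.1, hi.2⟩⟩
    have hdisj : Disjoint ((Finset.range (aSeq N)).filter (fun i => Gmem i = true))
        (Finset.Ico (aSeq N) (aSeq N + N)) := by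
      rw [Finset.disjoint_left]
      intro i hi hi2
      rw [Finset.mem_filter, Finset.mem_range] at hi
      rw [Finset.mem_Ico] at hi2
      omega
    have := Finset.card_le_card hsub
    rw [Finset.card_union_of_disjoint hdisj, Nat.card_Ico] at this
    have hc : aSeq N + N - aSeq N = N := by omega
    rw [hc] at this
    have hih : ∑ n ∈ Finset.range N, n ≤
        ((Finset.range (aSeq N)).filter (fun i => Gmem i = true)).card := ih
    unfold gcnt
    omega

lemma count_lemma (σ : ℕ → List ℕ) (T : Finset ℕ)
    (hcov : Aset ⊆ ⋃ k ∈ T, cylinder (σ k)) :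
    1 ≤ ∑ k ∈ T, (1 : ℝ) / 2 ^ gcnt (σ k).length := by
  classical
  set N := T.sup (fun k => (σ k).length) with hN
  have hlen : ∀ k ∈ T, (σ k).length ≤ aSeq N := by
    intro k hk
    have h1 : (σ k).length ≤ N := Finset.le_sup (f := fun k => (σ k).length) hk
    have h2 : N < 2 ^ N := Nat.lt_two_pow_self
    unfold aSeq; omega
  set s := (Finset.range (aSeq N)).filter (fun i => Gmem i = true) with hs
  have hscard : s.card = gcnt (aSeq N) := rfl
  have hPhiA : ∀ t ∈ s.powerset, Phi t ∈ Aset := by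
    intro t ht
    rw [Finset.mem_powerset] at ht
    intro i _
    by_cases h : Gmem i
    · simp only [h, if_true]
      unfold Phi
      by_cases h2 : i ∈ t <;> simp [h2]
    · simp only [h, if_false]
      have : i ∉ t := by
        intro hit
        have := ht hit
        rw [hs, Finset.mem_filter] at this
        exact h this.2
      simp [Phi, this]
  have key : 2 ^ gcnt (aSeq N) ≤ ∑ k ∈ T, 2 ^ (gcnt (aSeq N) - gcnt (σ k).length) := by
    have h1 : s.powerset ⊆ T.biUnion
        (fun k => s.powerset.filter (fun t => Phi t ∈ cylinder (σ k))) := by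
      intro t ht
      have := hcov (hPhiA t ht)
      rw [Set.mem_iUnion₂] at this
      obtain ⟨k, hk, hmem⟩ := this
      exact Finset.mem_biUnion.2 ⟨k, hk, Finset.mem_filter.2 ⟨ht, hmem⟩⟩
    have h2 : ∀ k ∈ T, (s.powerset.filter (fun t => Phi t ∈ cylinder (σ k))).card ≤
        2 ^ (gcnt (aSeq N) - gcnt (σ k).length) := by
      intro k hk
      set m := (σ k).length with hm
      have hmN : m ≤ aSeq N := hlen k hk
      have hcard2 : (s.filter (fun i => m ≤ i)).card = gcnt (aSeq N) - gcnt m := by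
        have heq : s.filter (fun i => ¬ m ≤ i) = (Finset.range m).filter (fun i => Gmem i = true) := by
          ext i
          rw [hs]
          simp only [Finset.mem_filter, Finset.mem_range]
          constructor
          · rintro ⟨⟨_, hg⟩, hlt⟩; exact ⟨by omega, hg⟩
          · rintro ⟨hlt, hg⟩; exact ⟨⟨by omega, hg⟩, by omega⟩
        have hpm := Finset.card_filter_add_card_filter_not (s := s) (p := fun i => m ≤ i)
        rw [heq] at hpm
        have : ((Finset.range m).filter (fun i => Gmem i = true)).card = gcnt m := rfl
        rw [this] at hpm
        omega
      calc (s.powerset.filter (fun t => Phi t ∈ cylinder (σ k))).card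
          ≤ ((s.filter (fun i => m ≤ i)).powerset).card := by
            apply Finset.card_le_card_of_injOn (fun t => t.filter (fun i => m ≤ i))
            · intro t ht
              rw [Finset.mem_coe, Finset.mem_filter, Finset.mem_powerset] at ht
              rw [Finset.mem_coe, Finset.mem_powerset]
              exact Finset.filter_subset_filter _ ht.1
            · intro t1 ht1 t2 ht2 heq0
              have heq : Finset.filter (fun i => m ≤ i) t1 = Finset.filter (fun i => m ≤ i) t2 := heq0
              simp only [Finset.coe_filter, Set.mem_setOf_eq, Finset.mem_powerset] at ht1 ht2
              ext i
              by_cases hi : m ≤ i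
              · constructor
                · intro h
                  have : i ∈ t1.filter (fun i => m ≤ i) := Finset.mem_filter.2 ⟨h, hi⟩
                  rw [heq] at this
                  exact (Finset.mem_filter.1 this).1
                · intro h
                  have : i ∈ t2.filter (fun i => m ≤ i) := Finset.mem_filter.2 ⟨h, hi⟩
                  rw [← heq] at this
                  exact (Finset.mem_filter.1 this).1
              · -- i < m : membership determined by σ k
                have hfi : ∀ t : Finset ℕ, Phi t ∈ cylinder (σ k) →
                    (i ∈ t ↔ (σ k).get ⟨i, by omega⟩ = 1) := by
                  intro t hcyl
                  have := hcyl ⟨i, by omega⟩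
                  unfold Phi at this
                  by_cases h2 : i ∈ t
                  · simp [h2] at this; simp [h2, ← this]
                  · simp [h2] at this; simp [h2, ← this]
                rw [hfi t1 ht1.2, hfi t2 ht2.2]
          _ = 2 ^ (gcnt (aSeq N) - gcnt m) := by
            rw [Finset.card_powerset, hcard2]
    calc 2 ^ gcnt (aSeq N) = s.powerset.card := by rw [Finset.card_powerset, hscard]
      _ ≤ (T.biUnion (fun k => s.powerset.filter (fun t => Phi t ∈ cylinder (σ k)))).card :=
          Finset.card_le_card h1
      _ ≤ ∑ k ∈ T, (s.powerset.filter (fun t => Phi t ∈ cylinder (σ k))).card :=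
          Finset.card_biUnion_le
      _ ≤ ∑ k ∈ T, 2 ^ (gcnt (aSeq N) - gcnt (σ k).length) := Finset.sum_le_sum h2
  -- move to ℝ
  have hgle : ∀ k ∈ T, gcnt (σ k).length ≤ gcnt (aSeq N) := fun k hk => gcnt_mono (hlen k hk)
  have keyR : (2 : ℝ) ^ gcnt (aSeq N) ≤
      ∑ k ∈ T, (2 : ℝ) ^ (gcnt (aSeq N) - gcnt (σ k).length) := by
    exact_mod_cast key
  have hrw : ∑ k ∈ T, (2 : ℝ) ^ (gcnt (aSeq N) - gcnt (σ k).length) =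
      2 ^ gcnt (aSeq N) * ∑ k ∈ T, (1 : ℝ) / 2 ^ gcnt (σ k).length := by
    rw [Finset.mul_sum]
    apply Finset.sum_congr rfl
    intro k hk
    have hb := hgle k hk
    have h1 : gcnt (aSeq N) - gcnt (σ k).length + gcnt (σ k).length = gcnt (aSeq N) :=
      Nat.sub_add_cancel hb
    have h2 : (2 : ℝ) ^ (gcnt (aSeq N) - gcnt (σ k).length) * 2 ^ gcnt (σ k).length =
        2 ^ gcnt (aSeq N) := by rw [← pow_add, h1]
    have h3 : (0 : ℝ) < 2 ^ gcnt (σ k).length := by positivity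
    field_simp
    linarith [h2]
  rw [hrw] at keyR
  have h3 : (0 : ℝ) < 2 ^ gcnt (aSeq N) := by positivity
  nlinarith [keyR, h3]

lemma growth (p : Polynomial ℝ) (hp : ∀ n : ℕ, 1 ≤ p.eval (n : ℝ)) :
    ∃ M : ℕ, ∀ m : ℕ, M ≤ m → p.eval (m : ℝ) ≤ 2 ^ gcnt m := by
  classical
  set d := p.natDegree with hd
  set C : ℝ := ∑ i ∈ Finset.range (d + 1), |p.coeff i| with hC
  have hCbound : ∀ m : ℕ, 1 ≤ m → p.eval (m : ℝ) ≤ C * (m : ℝ) ^ d := by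
    intro m hm
    rw [Polynomial.eval_eq_sum_range]
    calc ∑ i ∈ Finset.range (d + 1), p.coeff i * (m : ℝ) ^ i
        ≤ ∑ i ∈ Finset.range (d + 1), |p.coeff i| * (m : ℝ) ^ d := by
          apply Finset.sum_le_sum
          intro i hi
          rw [Finset.mem_range] at hi
          have hm1 : (1 : ℝ) ≤ (m : ℝ) := by exact_mod_cast hm
          have h1 : (m : ℝ) ^ i ≤ (m : ℝ) ^ d := pow_le_pow_right₀ hm1 (by omega)
          calc p.coeff i * (m : ℝ) ^ i ≤ |p.coeff i| * (m : ℝ) ^ i :=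
                mul_le_mul_of_nonneg_right (le_abs_self _) (by positivity)
            _ ≤ |p.coeff i| * (m : ℝ) ^ d :=
                mul_le_mul_of_nonneg_left h1 (abs_nonneg _)
      _ = C * (m : ℝ) ^ d := by rw [hC, Finset.sum_mul]
  set Cn := ⌈C⌉₊ with hCn
  refine ⟨2 ^ (d * d + 3 * d + Cn + 2), fun m hm => ?_⟩
  set N := Nat.log 2 (m + 1) with hNdef
  have hm0 : 1 ≤ m := le_trans Nat.one_le_two_pow hm
  have hN1 : 2 ^ N ≤ m + 1 := Nat.pow_log_le_self 2 (by omega)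
  have hN2 : m + 1 < 2 ^ (N + 1) := Nat.lt_pow_succ_log_self one_lt_two _
  have hN0 : d * d + 3 * d + Cn + 2 ≤ N :=
    (Nat.le_log_iff_pow_le one_lt_two (by omega)).2 (by omega)
  have hgm : ∑ n ∈ Finset.range N, n ≤ gcnt m := by
    refine le_trans (tri N) (gcnt_mono ?_)
    have : aSeq N = 2 ^ N - 1 := rfl
    omega
  have harith : (N + 1) * d + Cn ≤ ∑ n ∈ Finset.range N, n := by
    have h1 : (N - (d + 1)) * (d + 1) ≤ ∑ n ∈ Finset.range N, n := by
      calc (N - (d + 1)) * (d + 1) = ∑ _n ∈ Finset.Ico (d + 1) N, (d + 1) := by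
            rw [Finset.sum_const, Nat.card_Ico, smul_eq_mul]
        _ ≤ ∑ n ∈ Finset.Ico (d + 1) N, n :=
            Finset.sum_le_sum fun n hn => (Finset.mem_Ico.1 hn).1
        _ ≤ ∑ n ∈ Finset.range N, n := by
            refine Finset.sum_le_sum_of_subset ?_
            rw [Finset.range_eq_Ico]
            exact Finset.Ico_subset_Ico (Nat.zero_le _) le_rfl
    refine le_trans ?_ h1
    obtain ⟨t, ht⟩ : ∃ t, N = d * d + 3 * d + Cn + 2 + t := ⟨N - (d * d + 3 * d + Cn + 2), by omega⟩
    have hsub : N - (d + 1) = d * d + 2 * d + Cn + 1 + t := by omega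
    rw [hsub, ht]
    nlinarith [Nat.zero_le t, Nat.zero_le d]
  have hC2 : C ≤ (2 : ℝ) ^ Cn := by
    refine le_trans (Nat.le_ceil C) ?_
    exact_mod_cast (Nat.lt_two_pow_self (n := Cn)).le
  have hmle : (m : ℝ) ≤ 2 ^ (N + 1) := by
    have : m ≤ 2 ^ (N + 1) := by omega
    exact_mod_cast this
  calc p.eval (m : ℝ) ≤ C * (m : ℝ) ^ d := hCbound m hm0
    _ ≤ 2 ^ Cn * ((2 : ℝ) ^ (N + 1)) ^ d := by
        apply mul_le_mul hC2 (pow_le_pow_left₀ (by positivity) hmle d) (by positivity) (by positivity)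
    _ = 2 ^ (Cn + (N + 1) * d) := by rw [← pow_mul, ← pow_add]
    _ ≤ 2 ^ gcnt m := pow_le_pow_right₀ one_le_two (by omega)

lemma fE_Aset : fE (fun n => n ^ 2) Aset := by
  classical
  refine ⟨aSeq, rfl, aSeq_strictMono,
    fun n => Phi '' ((Finset.Ico (aSeq n) (aSeq n + n)).powerset : Set (Finset ℕ)),
    ?_, ?_, ?_, ?_⟩
  · -- SuppIco
    intro n σ hσ i hi
    obtain ⟨t, ht, rfl⟩ := hσ
    rw [Finset.mem_coe, Finset.mem_powerset] at ht
    have hit : i ∉ t := by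
      intro h
      have := Finset.mem_Ico.1 (ht h)
      have := mid_le n
      omega
    simp [Phi, hit]
  · intro n; exact ((Finset.Ico (aSeq n) (aSeq n + n)).powerset.finite_toSet).image _
  · -- Summable
    apply Summable.of_nonneg_of_le (f := fun n => (1 / 2 : ℝ) ^ n)
    · intro n; positivity
    · intro n
      have hdiff : aSeq (n + 1) - aSeq n = 2 ^ n := aSeq_diff n
      have hcard : (Phi '' ((Finset.Ico (aSeq n) (aSeq n + n)).powerset : Set (Finset ℕ))).ncard
          ≤ 2 ^ n := by
        calc (Phi '' ((Finset.Ico (aSeq n) (aSeq n + n)).powerset : Set (Finset ℕ))).ncard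
            ≤ (((Finset.Ico (aSeq n) (aSeq n + n)).powerset : Set (Finset ℕ))).ncard :=
              Set.ncard_image_le ((Finset.Ico (aSeq n) (aSeq n + n)).powerset.finite_toSet)
          _ = ((Finset.Ico (aSeq n) (aSeq n + n)).powerset).card := Set.ncard_coe_finset _
          _ = 2 ^ (Finset.Ico (aSeq n) (aSeq n + n)).card := Finset.card_powerset _
          _ = 2 ^ n := by rw [Nat.card_Ico]; congr 1; omega
      have hcardR :
          ((Phi '' ((Finset.Ico (aSeq n) (aSeq n + n)).powerset : Set (Finset ℕ))).ncard : ℝ)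
          ≤ (2 : ℝ) ^ n := by exact_mod_cast hcard
      simp only [hdiff]
      have hpos : (0 : ℝ) < (((2 ^ n) ^ 2 : ℕ) : ℝ) := by positivity
      rw [div_le_iff₀ hpos]
      have h2 : ((1 / 2 : ℝ)) ^ n * (((2 ^ n) ^ 2 : ℕ) : ℝ) = 2 ^ n := by
        push_cast
        rw [div_pow, one_pow]
        field_simp
      rw [h2]
      exact hcardR
    · exact summable_geometric_of_lt_one (by norm_num) (by norm_num)
  · -- subset
    intro x hx
    refine Filter.Eventually.of_forall (fun n => ?_)
    refine ⟨(Finset.Ico (aSeq n) (aSeq n + n)).filter (fun i => x i = 1),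
      by rw [Finset.mem_coe, Finset.mem_powerset]; exact Finset.filter_subset _ _, ?_⟩
    funext i
    unfold Phi restrIco
    simp only [Finset.mem_filter, Finset.mem_Ico]
    by_cases h1 : aSeq n ≤ i ∧ i < aSeq n + n
    · have hG : Gmem i = true := (Gmem_iff i).2 ⟨n, h1.1, h1.2⟩
      have hx1 := Aset_cases hx i hG
      have h2 : aSeq n ≤ i ∧ i < aSeq (n + 1) := ⟨h1.1, by have := mid_le n; omega⟩
      rcases hx1 with h | h
      · simp [h1, h, h2]
      · simp [h1, h, h2]
    · by_cases h2 : aSeq n ≤ i ∧ i < aSeq (n + 1)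
      · have hG : ¬ Gmem i = true := by
          rw [Gmem_iff]
          rintro ⟨m, hm1, hm2⟩
          have hm3 : i < aSeq (m + 1) := by have := mid_le m; omega
          have hnm := interval_uniq h2.1 h2.2 hm1 hm3
          subst hnm
          omega
        have hx0 := Aset_zero hx i hG
        simp [h1, h2, hx0]
      · simp [h1, h2]

end Stmt11

theorem stmt11 :
    ∃ A : Set (ℕ → ℕ), fE (fun n => n ^ 2) A ∧
      ∀ p : Polynomial ℝ, (∀ n : ℕ, 1 ≤ p.eval (n : ℝ)) →
        ¬ fNR (fun n => p.eval (n : ℝ)) A := by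
  classical
  refine ⟨Stmt11.Aset, Stmt11.fE_Aset, ?_⟩
  intro p hp hfn
  obtain ⟨M, hM⟩ := Stmt11.growth p hp
  set S : ℝ := ∑ j ∈ Finset.range (M + 1), p.eval (j : ℝ) with hS
  have hS1 : (1 : ℝ) ≤ S := by
    calc (1 : ℝ) ≤ p.eval ((0 : ℕ) : ℝ) := hp 0
      _ ≤ S :=
        Finset.single_le_sum (f := fun j : ℕ => p.eval (j : ℝ))
          (fun j _ => le_trans zero_le_one (hp j)) (Finset.mem_range.2 (by omega))
  have hSpos : (0 : ℝ) < S := by linarith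
  have hpb : ∀ j : ℕ, j ≤ M → p.eval (j : ℝ) ≤ S := by
    intro j hj
    exact Finset.single_le_sum (f := fun j : ℕ => p.eval (j : ℝ))
      (fun j _ => le_trans zero_le_one (hp j)) (Finset.mem_range.2 (by omega))
  obtain ⟨σ, hsum, hlt, hcov⟩ := hfn (1 / (2 * S)) (by positivity)
  have hppos : ∀ m : ℕ, (0 : ℝ) < p.eval (m : ℝ) := fun m => by linarith [hp m]
  have hterm_nonneg : ∀ k, (0 : ℝ) ≤ 1 / p.eval (((σ k).length : ℕ) : ℝ) :=
    fun k => le_of_lt (div_pos one_pos (hppos _))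
  have hlenM : ∀ k, M ≤ (σ k).length := by
    intro k
    by_contra hcon
    push_neg at hcon
    have h1 : (1 : ℝ) / S ≤ 1 / p.eval (((σ k).length : ℕ) : ℝ) :=
      one_div_le_one_div_of_le (hppos _) (hpb _ (by omega))
    have h2 : (1 : ℝ) / p.eval (((σ k).length : ℕ) : ℝ) ≤
        ∑' n, (1 : ℝ) / p.eval (((σ n).length : ℕ) : ℝ) :=
      hsum.le_tsum k (fun j _ => hterm_nonneg j)
    have h3 : (1 : ℝ) / (2 * S) < 1 / S :=
      one_div_lt_one_div_of_lt hSpos (by linarith)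
    linarith
  obtain ⟨T, hT⟩ := Stmt11.Aset_compact.elim_finite_subcover (fun k => cylinder (σ k))
    (fun k => Stmt11.cylinder_open _) hcov
  have hkey := Stmt11.count_lemma σ T hT
  have hcomp : ∀ k ∈ T, (1 : ℝ) / 2 ^ Stmt11.gcnt (σ k).length ≤
      1 / p.eval (((σ k).length : ℕ) : ℝ) := by
    intro k _
    exact one_div_le_one_div_of_le (hppos _) (hM _ (hlenM k))
  have h4 : ∑ k ∈ T, (1 : ℝ) / 2 ^ Stmt11.gcnt (σ k).length ≤
      ∑ k ∈ T, (1 : ℝ) / p.eval (((σ k).length : ℕ) : ℝ) := Finset.sum_le_sum hcomp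
  have h5 : ∑ k ∈ T, (1 : ℝ) / p.eval (((σ k).length : ℕ) : ℝ) ≤
      ∑' n, (1 : ℝ) / p.eval (((σ n).length : ℕ) : ℝ) :=
    hsum.sum_le_tsum T (fun k _ => hterm_nonneg k)
  have h6 : (1 : ℝ) / (2 * S) ≤ 1 / 2 :=
    one_div_le_one_div_of_le (by norm_num) (by linarith)
  linarith
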